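/- Let n ≥ 1, α > 0, μ > 0, L ≥ 0, and let f : ℝⁿ → ℝ be L-smooth. Then for every p ∈ ℝⁿ, ∫ ‖(n/(2α²μ))·(f(p + μ•v) − f(p − μ•v)) • v‖² dσ_α(v) ≤ n²·(L·α·μ/2 + ‖∇f(p)‖)², where the integral is over v drawn from the uniform probability measure σ_α on the origin-centered sphere of radius α. -/

import Mathlib

open MeasureTheory

open scoped RealInnerProductSpace

lemma descent_lemma {E : Type*} [NormedAddCommGroup E] [InnerProductSpace ℝ E]
    [CompleteSpace E] {f : E → ℝ} {L : ℝ}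
    (hf : Differentiable ℝ f)
    (hsm : ∀ x y, ‖gradient f x - gradient f y‖ ≤ L * ‖x - y‖) (x h : E) :
    |f (x + h) - f x - ⟪gradient f x, h⟫| ≤ L / 2 * ‖h‖ ^ 2 := by
  set c : ℝ := ⟪gradient f x, h⟫ with hc
  set g : ℝ → ℝ := fun t => f (x + t • h) - f x - t * c with hg
  set g' : ℝ → ℝ := fun t => ⟪gradient f (x + t • h), h⟫ - c with hg'
  have hderiv : ∀ t : ℝ, HasDerivAt g (g' t) t := by
    intro t
    have hφ : HasDerivAt (fun t : ℝ => x + t • h) h t := by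
      have := ((hasDerivAt_id t).smul_const h).const_add x
      simpa using this
    have hF : HasFDerivAt f (InnerProductSpace.toDual ℝ E (gradient f (x + t • h)))
        (x + t • h) :=
      hasGradientAt_iff_hasFDerivAt.mp (hf (x + t • h)).hasGradientAt
    have hcomp := hF.comp_hasDerivAt t hφ
    have : HasDerivAt (fun t : ℝ => f (x + t • h)) (⟪gradient f (x + t • h), h⟫) t := by
      exact hcomp
    exact ((this.sub_const (f x)).sub ((hasDerivAt_id t).mul_const c)).congr_deriv (by simp [hg'])
  have key : ∀ u ∈ Set.Icc (0:ℝ) 1, ‖g u‖ ≤ L / 2 * ‖h‖ ^ 2 * u ^ 2 := by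
    refine image_norm_le_of_norm_deriv_right_le_deriv_boundary (f' := g')
      (B := fun t => L / 2 * ‖h‖ ^ 2 * t ^ 2) (B' := fun t => L * ‖h‖ ^ 2 * t)
      (fun t ht => (hderiv t).continuousAt.continuousWithinAt)
      (fun t ht => (hderiv t).hasDerivWithinAt) (by simp [hg]) (fun t => ?_) (fun t ht => ?_)
    · have := (hasDerivAt_pow 2 t).const_mul (L / 2 * ‖h‖ ^ 2)
      refine this.congr_deriv ?_
      push_cast
      ring
    ·
      have hgt : g' t = ⟪gradient f (x + t • h) - gradient f x, h⟫ := by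
        simp [hg', hc, inner_sub_left]
      rw [Real.norm_eq_abs, hgt]
      calc |⟪gradient f (x + t • h) - gradient f x, h⟫|
          ≤ ‖gradient f (x + t • h) - gradient f x‖ * ‖h‖ := abs_real_inner_le_norm _ _
        _ ≤ (L * ‖x + t • h - x‖) * ‖h‖ := by
            have := hsm (x + t • h) x
            exact mul_le_mul_of_nonneg_right this (norm_nonneg _)
        _ = L * ‖h‖ ^ 2 * t := by
            rw [add_sub_cancel_left, norm_smul, Real.norm_eq_abs, abs_of_nonneg ht.1]
            ring
  have := key 1 (by norm_num)
  simpa [hg, Real.norm_eq_abs] using this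

/-- For an `L`-smooth `f : ℝⁿ → ℝ`, the second moment of the single-sample
two-point zeroth-order gradient estimator is at most `n²·(Lαμ/2 + ‖∇f(p)‖)²`. -/
theorem gw_estimator_second_moment_single
    (n : ℕ) (hn : 1 ≤ n) (α μ L : ℝ) (hα : 0 < α) (hμ : 0 < μ) (hL : 0 ≤ L)
    (σ : Measure (EuclideanSpace ℝ (Fin n))) [IsProbabilityMeasure σ]
    (hσ_sphere : ∀ᵐ v ∂σ, ‖v‖ = α)
    (hσ_rot : ∀ R : EuclideanSpace ℝ (Fin n) ≃ₗᵢ[ℝ] EuclideanSpace ℝ (Fin n),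
      Measure.map R σ = σ)
    (f : EuclideanSpace ℝ (Fin n) → ℝ)
    (hf_diff : Differentiable ℝ f)
    (hf_smooth : ∀ x y, ‖gradient f x - gradient f y‖ ≤ L * ‖x - y‖)
    (p : EuclideanSpace ℝ (Fin n)) :
    ∫ v, ‖((n : ℝ) / (2 * α ^ 2 * μ) * (f (p + μ • v) - f (p - μ • v))) • v‖ ^ 2 ∂σ
      ≤ (n : ℝ) ^ 2 * (L * α * μ / 2 + ‖gradient f p‖) ^ 2 := by
  set G : ℝ := ‖gradient f p‖ with hG
  have hGnn : 0 ≤ G := norm_nonneg _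
  set C : ℝ := (n : ℝ) ^ 2 * (L * α * μ / 2 + G) ^ 2 with hC
  have hCnn : 0 ≤ C := by positivity
  have hpt : ∀ᵐ v ∂σ,
      ‖((n : ℝ) / (2 * α ^ 2 * μ) * (f (p + μ • v) - f (p - μ • v))) • v‖ ^ 2 ≤ C := by
    filter_upwards [hσ_sphere] with v hv
    have h1 := descent_lemma hf_diff hf_smooth p (μ • v)
    have h2 := descent_lemma hf_diff hf_smooth p (-(μ • v))
    rw [← sub_eq_add_neg] at h2
    have hnμv : ‖μ • v‖ = μ * α := by
      rw [norm_smul, Real.norm_eq_abs, abs_of_pos hμ, hv]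
    have hip : |⟪gradient f p, μ • v⟫| ≤ G * (μ * α) := by
      calc |⟪gradient f p, μ • v⟫| ≤ ‖gradient f p‖ * ‖μ • v‖ := abs_real_inner_le_norm _ _
        _ = G * (μ * α) := by rw [hnμv]
    rw [inner_neg_right] at h2
    set Δ : ℝ := f (p + μ • v) - f (p - μ • v) with hΔ
    have hΔbd : |Δ| ≤ L * μ ^ 2 * α ^ 2 + 2 * μ * α * G := by
      have habs : |Δ| ≤ |f (p + μ • v) - f p - ⟪gradient f p, μ • v⟫|
          + |f (p - μ • v) - f p - -⟪gradient f p, μ • v⟫| + 2 * |⟪gradient f p, μ • v⟫| := by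
        have : Δ = (f (p + μ • v) - f p - ⟪gradient f p, μ • v⟫)
            - (f (p - μ • v) - f p - -⟪gradient f p, μ • v⟫) + 2 * ⟪gradient f p, μ • v⟫ := by
          ring
        rw [this]
        calc _ ≤ |(f (p + μ • v) - f p - ⟪gradient f p, μ • v⟫)
            - (f (p - μ • v) - f p - -⟪gradient f p, μ • v⟫)| + |2 * ⟪gradient f p, μ • v⟫| :=
              abs_add_le _ _
          _ ≤ _ := by
              rw [abs_mul, abs_two]
              exact add_le_add_left (abs_sub _ _) _
      calc |Δ| ≤ _ := habs
        _ ≤ L / 2 * ‖μ • v‖ ^ 2 + L / 2 * ‖-(μ • v)‖ ^ 2 + 2 * (G * (μ * α)) := by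
            gcongr
        _ = L * μ ^ 2 * α ^ 2 + 2 * μ * α * G := by
            rw [norm_neg, hnμv]; ring
    have hexp : ‖((n : ℝ) / (2 * α ^ 2 * μ) * Δ) • v‖ ^ 2
        = ((n : ℝ) / (2 * α ^ 2 * μ)) ^ 2 * Δ ^ 2 * α ^ 2 := by
      rw [norm_smul, Real.norm_eq_abs, hv, mul_pow, abs_mul, mul_pow, sq_abs, sq_abs]
    rw [hexp]
    have hΔsq : Δ ^ 2 ≤ (L * μ ^ 2 * α ^ 2 + 2 * μ * α * G) ^ 2 := by
      rw [← sq_abs Δ]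
      have h0 : (0:ℝ) ≤ |Δ| := abs_nonneg _
      nlinarith
    have heq : ((n : ℝ) / (2 * α ^ 2 * μ)) ^ 2
        * (L * μ ^ 2 * α ^ 2 + 2 * μ * α * G) ^ 2 * α ^ 2 = C := by
      rw [hC]
      field_simp
    calc ((n : ℝ) / (2 * α ^ 2 * μ)) ^ 2 * Δ ^ 2 * α ^ 2
        ≤ ((n : ℝ) / (2 * α ^ 2 * μ)) ^ 2 * (L * μ ^ 2 * α ^ 2 + 2 * μ * α * G) ^ 2 * α ^ 2 := by
          gcongr
      _ = C := heq
  by_cases hint : Integrable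
      (fun v => ‖((n : ℝ) / (2 * α ^ 2 * μ) * (f (p + μ • v) - f (p - μ • v))) • v‖ ^ 2) σ
  · calc ∫ v, ‖((n : ℝ) / (2 * α ^ 2 * μ) * (f (p + μ • v) - f (p - μ • v))) • v‖ ^ 2 ∂σ
        ≤ ∫ _, C ∂σ := integral_mono_ae hint (integrable_const C) hpt
      _ = C := by simp
  · rw [integral_undef hint]
    exact hCnn
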